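/- Let L₁, L₂ be unit circles in ℝ² whose centres are at distance d with δ^{1/2} ≤ d ≤ 2 - δ^{1/2}. At each of the two intersection points of L₁ and L₂, the angle between the tangent lines of L₁ and L₂ is at least c·δ^{1/2} for some absolute constant c > 0. -/

import Mathlib

open Metric Set Real
open scoped RealInnerProductSpace

lemma two_mul_one_sub_cos_le_sq (x : ℝ) : 2 * (1 - Real.cos x) ≤ x ^ 2 := by
  have h1 : Real.cos (2 * (x / 2)) = 2 * Real.cos (x / 2) ^ 2 - 1 := Real.cos_two_mul _
  have h3 : Real.sin (x / 2) ^ 2 + Real.cos (x / 2) ^ 2 = 1 := Real.sin_sq_add_cos_sq _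
  have h2 : Real.sin (x / 2) ^ 2 ≤ (x / 2) ^ 2 := Real.sin_sq_le_sq
  have hx : 2 * (x / 2) = x := by ring
  rw [hx] at h1
  nlinarith

theorem tangent_angle_at_intersection_ge :
    ∃ c > 0, ∀ (δ : ℝ) (c₁ c₂ : EuclideanSpace ℝ (Fin 2)),
      0 < δ → δ < 1 / 10 ^ 4 →
      Real.sqrt δ ≤ dist c₁ c₂ → dist c₁ c₂ ≤ 2 - Real.sqrt δ →
      ∀ p ∈ Metric.sphere c₁ 1 ∩ Metric.sphere c₂ 1,
        c * Real.sqrt δ ≤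
          min (InnerProductGeometry.angle (p - c₁) (p - c₂))
            (π - InnerProductGeometry.angle (p - c₁) (p - c₂)) := by
  refine ⟨1, one_pos, fun δ c₁ c₂ hδ hδ' hd hd' p hp => ?_⟩
  obtain ⟨hp1, hp2⟩ := hp
  have hn1 : ‖p - c₁‖ = 1 := mem_sphere_iff_norm.mp hp1
  have hn2 : ‖p - c₂‖ = 1 := mem_sphere_iff_norm.mp hp2
  set d := dist c₁ c₂ with hdd
  have hs : Real.sqrt δ > 0 := Real.sqrt_pos.mpr hδ
  have hδs : δ ≤ Real.sqrt δ := by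
    have h1 : Real.sqrt δ ≤ 1 := Real.sqrt_le_one.mpr (by linarith)
    nlinarith [Real.sq_sqrt hδ.le]
  have hd0 : 0 < d := lt_of_lt_of_le hs hd
  have hdn : ‖(p - c₁) - (p - c₂)‖ = d := by
    have : (p - c₁) - (p - c₂) = c₂ - c₁ := by abel
    rw [this, ← dist_eq_norm, dist_comm]
  have hinner : (inner ℝ (p - c₁) (p - c₂) : ℝ) = 1 - d ^ 2 / 2 := by
    have h := @norm_sub_sq_real (EuclideanSpace ℝ (Fin 2)) _ _ (p - c₁) (p - c₂)
    rw [hdn, hn1, hn2] at h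
    nlinarith
  set θ := InnerProductGeometry.angle (p - c₁) (p - c₂) with hθ
  have hcos : Real.cos θ = 1 - d ^ 2 / 2 := by
    rw [hθ, InnerProductGeometry.cos_angle, hinner, hn1, hn2]; ring
  have hθ0 : 0 ≤ θ := InnerProductGeometry.angle_nonneg _ _
  have hθπ : θ ≤ π := InnerProductGeometry.angle_le_pi _ _
  have key1 : Real.sqrt δ ≤ θ := by
    have h := two_mul_one_sub_cos_le_sq θ
    rw [hcos] at h
    have hθd : d ^ 2 ≤ θ ^ 2 := by nlinarith
    have : d ≤ θ := by nlinarith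
    linarith
  have key2 : Real.sqrt δ ≤ π - θ := by
    have h := two_mul_one_sub_cos_le_sq (π - θ)
    rw [Real.cos_pi_sub, hcos] at h
    -- 2 * (1 - (d^2/2 - 1)) = 4 - d^2 = (2-d)(2+d) ≥ 2*(2-d) ≥ 2√δ
    have h2 : 2 * Real.sqrt δ ≤ (π - θ) ^ 2 := by nlinarith
    have hδle : δ ≤ (π - θ) ^ 2 := by nlinarith
    have := Real.sqrt_le_sqrt hδle
    rwa [Real.sqrt_sq (by linarith)] at this
  rw [one_mul]
  exact le_min key1 key2
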